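/- (Lemma 2.1 of the paper.) Along the compressive branch of the 4-shock curve, the density, velocity, pressure and shock speed are all strictly increasing with respect to the Lax parameter α₄(ρ) = (u(ρ) + c(ρ)) − (u_r + c_r). Precisely: for all ρ₁, ρ₂ with ρ_r < ρ₁ < ρ₂ < η ρ_r one has α₄(ρ₁) < α₄(ρ₂), u(ρ₁) < u(ρ₂), p(ρ₁) < p(ρ₂) and s(ρ₁) < s(ρ₂); hence, as functions of α₄ on the image of (ρ_r, η ρ_r), the quantities ρ, u, p and s are strictly increasing. -/

import Mathlib

/-- Helper: compare quotients by square roots via squared inequality. -/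
lemma sqrt_div_lt_sqrt_div (x y a b : ℝ) (hx : 0 ≤ x) (hy : 0 ≤ y)
    (ha : 0 < a) (hb : 0 < b) (h : x ^ 2 * b < y ^ 2 * a) :
    x / Real.sqrt a < y / Real.sqrt b := by
  have sa : 0 < Real.sqrt a := Real.sqrt_pos.2 ha
  have sb : 0 < Real.sqrt b := Real.sqrt_pos.2 hb
  rw [div_lt_div_iff₀ sa sb]
  have h1 : x * Real.sqrt b = Real.sqrt (x ^ 2 * b) := by
    rw [Real.sqrt_mul (by positivity), Real.sqrt_sq hx]
  have h2 : y * Real.sqrt a = Real.sqrt (y ^ 2 * a) := by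
    rw [Real.sqrt_mul (by positivity), Real.sqrt_sq hy]
  rw [h1, h2]
  exact Real.sqrt_lt_sqrt (by positivity) h

set_option maxHeartbeats 1000000 in
/-- Lemma 2.1 of the paper: along the compressive branch of the 4-shock curve, the
density, velocity, pressure and shock speed are all strictly increasing with respect
to the Lax parameter `α₄`. -/
theorem stmt6 (γ ρr ur pr η cr : ℝ)
    (hγ : 1 < γ) (hρr : 0 < ρr) (hpr : 0 < pr)
    (hη : η = (γ + 1) / (γ - 1))
    (hcr : cr = Real.sqrt (γ * pr / ρr))
    (p u c s α : ℝ → ℝ)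
    (hp : ∀ ρ, p ρ = pr * (η * ρ - ρr) / (η * ρr - ρ))
    (hu : ∀ ρ, u ρ = ur + cr * Real.sqrt (2 / (γ - 1)) * (ρ - ρr)
        / Real.sqrt ((η * ρr - ρ) * ρ))
    (hc : ∀ ρ, c ρ = Real.sqrt (γ * p ρ / ρ))
    (hs : ∀ ρ, s ρ = (ρ * u ρ - ρr * ur) / (ρ - ρr))
    (hα : ∀ ρ, α ρ = (u ρ + c ρ) - (ur + cr)) :
    ∀ ρ₁ ρ₂ : ℝ, ρr < ρ₁ → ρ₁ < ρ₂ → ρ₂ < η * ρr →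
      α ρ₁ < α ρ₂ ∧ u ρ₁ < u ρ₂ ∧ p ρ₁ < p ρ₂ ∧ s ρ₁ < s ρ₂ := by
  intro ρ₁ ρ₂ h1 h12 h2
  have hγ1 : 0 < γ - 1 := by linarith
  have hη1 : 1 < η := by
    rw [hη, lt_div_iff₀ hγ1]; linarith
  have hη0 : 0 < η := lt_trans one_pos hη1
  have hcrpos : 0 < cr := by
    rw [hcr]; exact Real.sqrt_pos.2 (by positivity)
  set K : ℝ := cr * Real.sqrt (2 / (γ - 1)) with hK
  have hKpos : 0 < K := mul_pos hcrpos (Real.sqrt_pos.2 (by positivity))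
  have hρ1 : 0 < ρ₁ := lt_trans hρr h1
  have hρ2 : 0 < ρ₂ := lt_trans hρ1 h12
  have hd1 : 0 < η * ρr - ρ₁ := by linarith
  have hd2 : 0 < η * ρr - ρ₂ := by linarith
  have hD1 : 0 < (η * ρr - ρ₁) * ρ₁ := mul_pos hd1 hρ1
  have hD2 : 0 < (η * ρr - ρ₂) * ρ₂ := mul_pos hd2 hρ2
  have h21 : 0 < ρ₂ - ρ₁ := sub_pos.2 h12
  have h1r : 0 < ρ₁ - ρr := sub_pos.2 h1
  have h2r : 0 < ρ₂ - ρr := by linarith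
  have hηm1 : 0 < η - 1 := sub_pos.2 hη1
  -- u monotone
  have hupoly : (K * (ρ₁ - ρr)) ^ 2 * ((η * ρr - ρ₂) * ρ₂)
      < (K * (ρ₂ - ρr)) ^ 2 * ((η * ρr - ρ₁) * ρ₁) := by
    have key : (ρ₁ - ρr) ^ 2 * ((η * ρr - ρ₂) * ρ₂)
        < (ρ₂ - ρr) ^ 2 * ((η * ρr - ρ₁) * ρ₁) := by
      nlinarith [mul_pos (mul_pos h21 hρr) (mul_pos (mul_pos hηm1 hρ1) h2r),
        mul_pos (mul_pos h21 hρr) (mul_pos h1r hd2)]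
    calc (K * (ρ₁ - ρr)) ^ 2 * ((η * ρr - ρ₂) * ρ₂)
        = K ^ 2 * ((ρ₁ - ρr) ^ 2 * ((η * ρr - ρ₂) * ρ₂)) := by ring
      _ < K ^ 2 * ((ρ₂ - ρr) ^ 2 * ((η * ρr - ρ₁) * ρ₁)) :=
          mul_lt_mul_of_pos_left key (by positivity)
      _ = (K * (ρ₂ - ρr)) ^ 2 * ((η * ρr - ρ₁) * ρ₁) := by ring
  have hufrac : K * (ρ₁ - ρr) / Real.sqrt ((η * ρr - ρ₁) * ρ₁)
      < K * (ρ₂ - ρr) / Real.sqrt ((η * ρr - ρ₂) * ρ₂) :=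
    sqrt_div_lt_sqrt_div _ _ _ _ (mul_pos hKpos h1r).le (mul_pos hKpos h2r).le
      hD1 hD2 hupoly
  have huu : u ρ₁ < u ρ₂ := by
    rw [hu ρ₁, hu ρ₂]
    have e1 : cr * Real.sqrt (2 / (γ - 1)) * (ρ₁ - ρr) = K * (ρ₁ - ρr) := rfl
    have e2 : cr * Real.sqrt (2 / (γ - 1)) * (ρ₂ - ρr) = K * (ρ₂ - ρr) := rfl
    rw [e1, e2]; linarith
  -- p monotone
  have hη2 : 0 < η ^ 2 - 1 := by nlinarith
  have hpp : p ρ₁ < p ρ₂ := by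
    rw [hp ρ₁, hp ρ₂, div_lt_div_iff₀ hd1 hd2]
    nlinarith [mul_pos (mul_pos hpr hρr) (mul_pos hη2 h21)]
  -- c monotone
  have hcc : c ρ₁ < c ρ₂ := by
    rw [hc ρ₁, hc ρ₂]
    apply Real.sqrt_lt_sqrt
    · have hn1 : 0 < η * ρ₁ - ρr := by nlinarith
      rw [hp ρ₁]; positivity
    · have e1 : γ * p ρ₁ / ρ₁ = γ * pr * (η * ρ₁ - ρr) / ((η * ρr - ρ₁) * ρ₁) := by
        rw [hp ρ₁]; field_simp
      have e2 : γ * p ρ₂ / ρ₂ = γ * pr * (η * ρ₂ - ρr) / ((η * ρr - ρ₂) * ρ₂) := by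
        rw [hp ρ₂]; field_simp
      rw [e1, e2, div_lt_div_iff₀ hD1 hD2]
      have hbr : 0 < η * (ρ₁ * ρ₂) + η * ρr ^ 2 - ρr * ρ₁ - ρr * ρ₂ := by
        nlinarith [mul_pos hηm1 (show 0 < ρ₁ * ρ₂ + ρr ^ 2 by positivity),
          mul_pos h1r h2r]
      nlinarith [mul_pos (mul_pos (show (0:ℝ) < γ * pr by positivity) h21) hbr]
  -- α monotone
  have hαα : α ρ₁ < α ρ₂ := by rw [hα ρ₁, hα ρ₂]; linarith
  -- s monotone
  have hsform : ∀ ρ : ℝ, ρr < ρ → ρ < η * ρr →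
      s ρ = ur + K * ρ / Real.sqrt ((η * ρr - ρ) * ρ) := by
    intro ρ hl hr
    have hρ : 0 < ρ := lt_trans hρr hl
    have hne : ρ - ρr ≠ 0 := ne_of_gt (by linarith)
    set t : ℝ := Real.sqrt ((η * ρr - ρ) * ρ) with ht
    have htpos : 0 < t := Real.sqrt_pos.2 (mul_pos (by linarith) hρ)
    have htne : t ≠ 0 := ne_of_gt htpos
    rw [hs ρ, hu ρ]
    have e : cr * Real.sqrt (2 / (γ - 1)) * (ρ - ρr) = K * (ρ - ρr) := rfl
    rw [e]
    have expand : ρ * (ur + K * (ρ - ρr) / t) - ρr * ur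
        = (ρ - ρr) * (ur + K * ρ / t) := by
      field_simp
      ring
    rw [expand, mul_div_cancel_left₀ _ hne]
  have hss : s ρ₁ < s ρ₂ := by
    rw [hsform ρ₁ h1 (lt_trans h12 h2), hsform ρ₂ (lt_trans h1 h12) h2]
    have key : (K * ρ₁) ^ 2 * ((η * ρr - ρ₂) * ρ₂)
        < (K * ρ₂) ^ 2 * ((η * ρr - ρ₁) * ρ₁) := by
      have base : ρ₁ ^ 2 * ((η * ρr - ρ₂) * ρ₂) < ρ₂ ^ 2 * ((η * ρr - ρ₁) * ρ₁) := by
        nlinarith [mul_pos (mul_pos hρ1 hρ2) (mul_pos (mul_pos hη0 hρr) h21)]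
      calc (K * ρ₁) ^ 2 * ((η * ρr - ρ₂) * ρ₂)
          = K ^ 2 * (ρ₁ ^ 2 * ((η * ρr - ρ₂) * ρ₂)) := by ring
        _ < K ^ 2 * (ρ₂ ^ 2 * ((η * ρr - ρ₁) * ρ₁)) :=
            mul_lt_mul_of_pos_left base (by positivity)
        _ = (K * ρ₂) ^ 2 * ((η * ρr - ρ₁) * ρ₁) := by ring
    have := sqrt_div_lt_sqrt_div (K * ρ₁) (K * ρ₂) _ _
      (mul_pos hKpos hρ1).le (mul_pos hKpos hρ2).le hD1 hD2 key
    linarith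
  exact ⟨hαα, huu, hpp, hss⟩
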